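/- A prime p > 3 is a Lerch prime if and only if p·B_{p-1} ≡ p + (p-1)! (mod p³), where the congruence of rational numbers means p³ divides the numerator of p·B_{p-1} − p − (p-1)! in lowest terms. -/

import Mathlib

open Finset

namespace LerchAux

variable {p : ℕ} [hp : Fact p.Prime]

/-- `x = 0` or the `p`-adic valuation of `x` is at least `c`. -/
def PV (p : ℕ) (c : ℤ) (x : ℚ) : Prop := x = 0 ∨ c ≤ padicValRat p x

lemma PV_zero (c : ℤ) : PV p c 0 := Or.inl rfl

lemma PV.mono {c c' : ℤ} (h : c' ≤ c) {x : ℚ} (hx : PV p c x) : PV p c' x :=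
  hx.imp id fun h' => le_trans h h'

lemma PV.add {c : ℤ} {x y : ℚ} (hx : PV p c x) (hy : PV p c y) : PV p c (x + y) := by
  rcases hx with rfl | hx
  · simpa using hy
  rcases hy with rfl | hy
  · rw [add_zero]; exact Or.inr hx
  by_cases hxy : x + y = 0
  · exact Or.inl hxy
  · exact Or.inr (le_trans (le_min hx hy) (padicValRat.min_le_padicValRat_add hxy))

lemma PV.neg {c : ℤ} {x : ℚ} (hx : PV p c x) : PV p c (-x) := by
  rcases hx with rfl | hx
  · simpa using PV_zero (p := p) c
  · exact Or.inr (by rwa [padicValRat.neg])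

lemma PV.sub {c : ℤ} {x y : ℚ} (hx : PV p c x) (hy : PV p c y) : PV p c (x - y) := by
  rw [sub_eq_add_neg]; exact hx.add hy.neg

lemma PV.mul {a b : ℤ} {x y : ℚ} (hx : PV p a x) (hy : PV p b y) : PV p (a + b) (x * y) := by
  by_cases h0 : x = 0
  · simp [h0, PV_zero]
  by_cases h1 : y = 0
  · simp [h1, PV_zero]
  rcases hx with rfl | hx
  · exact absurd rfl h0
  rcases hy with rfl | hy
  · exact absurd rfl h1
  exact Or.inr (by rw [padicValRat.mul h0 h1]; exact add_le_add hx hy)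

lemma PV.sum {c : ℤ} {s : Finset ℕ} {F : ℕ → ℚ} (h : ∀ i ∈ s, PV p c (F i)) :
    PV p c (∑ i ∈ s, F i) := by
  classical
  induction s using Finset.induction_on with
  | empty => simpa using PV_zero (p := p) c
  | insert _ _ hns ih =>
    rw [Finset.sum_insert hns]
    exact (h _ (Finset.mem_insert_self _ _)).add (ih fun i hi => h i (Finset.mem_insert_of_mem hi))

lemma PV_intCast (z : ℤ) : PV p 0 (z : ℚ) := by
  by_cases h : (z : ℚ) = 0
  · exact Or.inl h
  · exact Or.inr (by rw [padicValRat.of_int]; exact Int.natCast_nonneg _)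

lemma PV_natCast (n : ℕ) : PV p 0 (n : ℚ) := by
  simpa using PV_intCast (p := p) (n : ℤ)

lemma PV_one : PV p 0 (1 : ℚ) := by simpa using PV_natCast (p := p) 1

lemma PV_pow (k : ℕ) : PV p k ((p : ℚ) ^ k) := by
  right
  rw [padicValRat.pow (p : ℚ), padicValRat.self hp.out.one_lt, mul_one]

lemma PV_inv_nat {n : ℕ} (h : ¬ p ∣ n) : PV p 0 ((n : ℚ)⁻¹) := by
  right
  rw [padicValRat.inv, padicValRat.of_nat, padicValNat.eq_zero_of_not_dvd h]
  simp

lemma PV_p_inv : PV p (-1) ((p : ℚ)⁻¹) :=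
  Or.inr (by rw [padicValRat.inv, padicValRat.self hp.out.one_lt])

lemma PV_nat_of_dvd {n : ℕ} (h : p ∣ n) : PV p 1 (n : ℚ) := by
  by_cases h0 : n = 0
  · exact Or.inl (by simp [h0])
  right
  rw [padicValRat.of_nat]
  exact_mod_cast one_le_padicValNat_of_dvd h0 h

lemma PV_int_iff {n : ℕ} {z : ℤ} : (p : ℤ) ^ n ∣ z ↔ PV p n (z : ℚ) := by
  rw [padicValInt_dvd_iff]
  unfold PV
  rw [padicValRat.of_int]
  constructor
  · rintro (rfl | h)
    · exact Or.inl (by simp)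
    · exact Or.inr (by exact_mod_cast h)
  · rintro (h | h)
    · exact Or.inl (by exact_mod_cast h)
    · exact Or.inr (by exact_mod_cast h)

lemma not_p_dvd_num_den {x : ℚ} (hd : p ∣ x.den) : ¬ (p : ℤ) ∣ x.num := by
  intro hn
  have h1 : p ∣ x.num.natAbs := by simpa using Int.natAbs_dvd_natAbs.mpr hn
  have h2 : p ∣ Nat.gcd x.num.natAbs x.den := Nat.dvd_gcd h1 hd
  rw [x.reduced] at h2
  have := Nat.dvd_one.mp h2
  have := hp.out.one_lt
  omega

lemma PV_num_iff {n : ℕ} (hn : 0 < n) {x : ℚ} : (p : ℤ) ^ n ∣ x.num ↔ PV p n x := by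
  constructor
  · intro h
    by_cases hx : x = 0
    · exact Or.inl hx
    right
    have hnum : x.num ≠ 0 := Rat.num_ne_zero.2 hx
    have hpnum : (p : ℤ) ∣ x.num := dvd_trans (dvd_pow_self _ hn.ne') h
    have hpden : ¬ p ∣ x.den := fun hd => not_p_dvd_num_den hd hpnum
    rw [padicValRat_def, padicValNat.eq_zero_of_not_dvd hpden]
    have := (padicValInt_dvd_iff (p := p) n x.num).1 h
    rcases this with h0 | h0
    · exact absurd h0 hnum
    · simpa using (by exact_mod_cast h0 : (n : ℤ) ≤ padicValInt p x.num)
  · intro h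
    rcases h with rfl | h
    · simp
    by_cases hx : x = 0
    · simp [hx]
    rw [padicValRat_def] at h
    by_cases hd : p ∣ x.den
    · exfalso
      have h1 : padicValInt p x.num = 0 :=
        padicValInt.eq_zero_of_not_dvd (not_p_dvd_num_den hd)
      have h2 : 1 ≤ padicValNat p x.den := one_le_padicValNat_of_dvd x.pos.ne' hd
      rw [h1] at h
      omega
    · rw [padicValNat.eq_zero_of_not_dvd hd, Nat.cast_zero, sub_zero] at h
      rw [padicValInt_dvd_iff]
      exact Or.inr (by exact_mod_cast h)

lemma PV.congr_iff {c : ℤ} {x y : ℚ} (h : PV p c (x - y)) : PV p c x ↔ PV p c y := by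
  constructor
  · intro hx
    have h2 : x - (x - y) = y := by ring
    rw [← h2]; exact hx.sub h
  · intro hy
    have h2 : y + (x - y) = x := by ring
    rw [← h2]; exact hy.add h

/-- The key inductive step: for `k < p - 1`,
`p * B_k - ∑_{a<p} a^k` has valuation at least 1, given `p`-adic bounds on smaller Bernoullis. -/
lemma diff_val {k : ℕ} (hk : k < p - 1)
    (ih : ∀ j, j < k → PV p (-1) (bernoulli j)) :
    PV p 1 ((p : ℚ) * bernoulli k - ∑ a ∈ range p, (a : ℚ) ^ k) := by
  have hp2 : 2 ≤ p := hp.out.two_le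
  have hk1 : ((k : ℚ) + 1) ≠ 0 := by positivity
  have hlast : bernoulli k * (((k + 1).choose k : ℕ) : ℚ) * (p : ℚ) ^ (k + 1 - k) / ((k : ℚ) + 1)
      = (p : ℚ) * bernoulli k := by
    rw [Nat.choose_succ_self_right, Nat.add_sub_cancel_left]
    push_cast
    field_simp
  rw [sum_range_pow p k, Finset.sum_range_succ, hlast]
  have heq : (p : ℚ) * bernoulli k -
      ((∑ i ∈ range k, bernoulli i * (((k + 1).choose i : ℕ) : ℚ) * (p : ℚ) ^ (k + 1 - i)
        / ((k : ℚ) + 1)) + (p : ℚ) * bernoulli k)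
      = -(∑ i ∈ range k, bernoulli i * (((k + 1).choose i : ℕ) : ℚ) * (p : ℚ) ^ (k + 1 - i)
        / ((k : ℚ) + 1)) := by ring
  rw [heq]
  apply PV.neg
  apply PV.sum
  intro i hi
  rw [Finset.mem_range] at hi
  have hndvd : ¬ p ∣ (k + 1) := by
    intro hdvd
    have := Nat.le_of_dvd (by omega) hdvd
    omega
  have hterm : bernoulli i * (((k + 1).choose i : ℕ) : ℚ) * (p : ℚ) ^ (k + 1 - i) / ((k : ℚ) + 1)
      = bernoulli i * (((k + 1).choose i : ℕ) : ℚ) * (p : ℚ) ^ (k + 1 - i)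
        * (((k + 1 : ℕ) : ℚ))⁻¹ := by
    push_cast
    rw [div_eq_mul_inv]
  rw [hterm]
  have hPV := (((ih i hi).mul (PV_natCast ((k + 1).choose i))).mul
      (PV_pow (p := p) (k + 1 - i))).mul (PV_inv_nat hndvd)
  refine hPV.mono ?_
  have h2 : 2 ≤ k + 1 - i := by omega
  have h2' : (2 : ℤ) ≤ ((k + 1 - i : ℕ) : ℤ) := by exact_mod_cast h2
  omega

/-- `p * B_k` is `p`-integral for `k < p - 1`. -/
lemma bern_val : ∀ k, k < p - 1 → PV p (-1) (bernoulli k) := by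
  intro k
  induction k using Nat.strong_induction_on with
  | _ k ih =>
    intro hk
    have hdiff := diff_val hk (fun j hj => ih j hj (by omega))
    have hS : (∑ a ∈ range p, (a : ℚ) ^ k) = ((∑ a ∈ range p, a ^ k : ℕ) : ℚ) := by
      push_cast
      rfl
    have hSv : PV p 0 (∑ a ∈ range p, (a : ℚ) ^ k) := hS ▸ PV_natCast _
    have hpB : PV p 0 ((p : ℚ) * bernoulli k) := by
      have heq : (p : ℚ) * bernoulli k =
          ((p : ℚ) * bernoulli k - ∑ a ∈ range p, (a : ℚ) ^ k)
            + ∑ a ∈ range p, (a : ℚ) ^ k := by ring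
      rw [heq]
      exact (hdiff.mono (by norm_num)).add hSv
    have heq2 : bernoulli k = ((p : ℚ) * bernoulli k) * ((p : ℚ))⁻¹ := by
      have hp0 : (p : ℚ) ≠ 0 := by exact_mod_cast hp.out.ne_zero
      field_simp
    rw [heq2]
    exact (hpB.mul PV_p_inv).mono (by norm_num)

/-- `B_{p-3}` is `p`-integral for `p > 3`. -/
lemma bern_p3 (h3 : 3 < p) : PV p 0 (bernoulli (p - 3)) := by
  have hk : p - 3 < p - 1 := by omega
  have hdiff := diff_val hk (fun j hj => bern_val j (by omega))
  -- the power sum is divisible by p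
  have hdvd : p ∣ ∑ a ∈ range p, a ^ (p - 3) := by
    rw [← ZMod.natCast_eq_zero_iff]
    push_cast
    have hbij : Function.Bijective (fun i : Fin p => ((i : ℕ) : ZMod p)) := by
      rw [Fintype.bijective_iff_injective_and_card]
      constructor
      · intro i j hij
        simp only at hij
        apply Fin.ext
        rw [← ZMod.val_cast_of_lt i.isLt, ← ZMod.val_cast_of_lt j.isLt, hij]
      · simp [ZMod.card]
    calc (∑ a ∈ range p, ((a : ZMod p)) ^ (p - 3))
        = ∑ i : Fin p, (((i : ℕ) : ZMod p)) ^ (p - 3) := by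
          rw [Fin.sum_univ_eq_sum_range (fun a => ((a : ZMod p)) ^ (p - 3)) p]
      _ = ∑ x : ZMod p, x ^ (p - 3) :=
          Fintype.sum_bijective _ hbij _ _ (fun i => rfl)
      _ = 0 := FiniteField.sum_pow_lt_card_sub_one (ZMod p) _ (by rw [ZMod.card]; omega)
  have hS : PV p 1 (∑ a ∈ range p, (a : ℚ) ^ (p - 3)) := by
    have hS' : (∑ a ∈ range p, (a : ℚ) ^ (p - 3)) = ((∑ a ∈ range p, a ^ (p - 3) : ℕ) : ℚ) := by
      push_cast; rfl
    rw [hS']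
    exact PV_nat_of_dvd hdvd
  have hpB : PV p 1 ((p : ℚ) * bernoulli (p - 3)) := by
    have heq : (p : ℚ) * bernoulli (p - 3) =
        ((p : ℚ) * bernoulli (p - 3) - ∑ a ∈ range p, (a : ℚ) ^ (p - 3))
          + ∑ a ∈ range p, (a : ℚ) ^ (p - 3) := by ring
    rw [heq]
    exact hdiff.add hS
  have heq2 : bernoulli (p - 3) = ((p : ℚ) * bernoulli (p - 3)) * ((p : ℚ))⁻¹ := by
    have hp0 : (p : ℚ) ≠ 0 := by exact_mod_cast hp.out.ne_zero
    field_simp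
  rw [heq2]
  exact (hpB.mul PV_p_inv).mono (by norm_num)

end LerchAux

open LerchAux

theorem lerch_prime_test (p : ℕ) (hp : p.Prime) (h3 : 3 < p) :
    (((p : ℤ) ^ 3) ∣ (∑ a ∈ Finset.Icc 1 (p - 1), (a : ℤ) ^ (p - 1)) - p
        - ((p - 1).factorial : ℤ)) ↔
      ((p : ℤ) ^ 3) ∣
        ((p : ℚ) * bernoulli (p - 1) - p - ((p - 1).factorial : ℚ)).num := by
  haveI : Fact p.Prime := ⟨hp⟩
  have hp1 : p - 1 + 1 = p := by omega
  have hp0 : (p : ℚ) ≠ 0 := by exact_mod_cast hp.ne_zero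
  rw [PV_int_iff, PV_num_iff (by norm_num)]
  -- key: the difference of the two quantities has valuation at least 3
  apply PV.congr_iff
  -- the difference equals `∑ a a^(p-1) - p * B_(p-1)`
  have hd : ((p - 1 : ℕ) : ℚ) + 1 = (p : ℚ) := by exact_mod_cast congrArg (Nat.cast : ℕ → ℚ) hp1
  have hIcc : (∑ a ∈ Finset.Icc 1 (p - 1), (a : ℚ) ^ (p - 1))
      = ∑ k ∈ Finset.range p, (k : ℚ) ^ (p - 1) := by
    have hins : Finset.range p = insert 0 (Finset.Icc 1 (p - 1)) := by
      ext x
      simp only [Finset.mem_range, Finset.mem_insert, Finset.mem_Icc]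
      omega
    rw [hins, Finset.sum_insert (by simp)]
    simp [zero_pow (show p - 1 ≠ 0 by omega)]
  have hSq : (∑ k ∈ Finset.range p, (k : ℚ) ^ (p - 1))
      = ∑ i ∈ Finset.range p,
          bernoulli i * ((p.choose i : ℕ) : ℚ) * (p : ℚ) ^ (p - i) / (p : ℚ) := by
    rw [sum_range_pow p (p - 1), hp1, hd]
  have hsplit : (∑ i ∈ Finset.range p,
        bernoulli i * ((p.choose i : ℕ) : ℚ) * (p : ℚ) ^ (p - i) / (p : ℚ))
      = (∑ i ∈ Finset.range (p - 1),
          bernoulli i * ((p.choose i : ℕ) : ℚ) * (p : ℚ) ^ (p - i) / (p : ℚ))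
        + bernoulli (p - 1) * ((p.choose (p - 1) : ℕ) : ℚ) * (p : ℚ) ^ (p - (p - 1)) / (p : ℚ)
      := by
    rw [← Finset.sum_range_succ, hp1]
  have hlastF : bernoulli (p - 1) * ((p.choose (p - 1) : ℕ) : ℚ) * (p : ℚ) ^ (p - (p - 1))
        / (p : ℚ) = (p : ℚ) * bernoulli (p - 1) := by
    have h1 : p.choose (p - 1) = p := by
      rw [show p - 1 = p - 1 from rfl, Nat.choose_symm (by omega : 1 ≤ p), Nat.choose_one_right]
    have h2 : p - (p - 1) = 1 := by omega
    rw [h1, h2, pow_one]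
    field_simp
  have hT : PV p 3 (∑ i ∈ Finset.range (p - 1),
      bernoulli i * ((p.choose i : ℕ) : ℚ) * (p : ℚ) ^ (p - i) / (p : ℚ)) := by
    apply PV.sum
    intro i hi
    rw [Finset.mem_range] at hi
    have hterm : bernoulli i * ((p.choose i : ℕ) : ℚ) * (p : ℚ) ^ (p - i) / (p : ℚ)
        = bernoulli i * ((p.choose i : ℕ) : ℚ) * (p : ℚ) ^ (p - i) * ((p : ℚ))⁻¹ := by
      rw [div_eq_mul_inv]
    rw [hterm]
    by_cases h0 : i = 0
    · subst h0
      have := ((PV_one.mul (PV_natCast (p.choose 0))).mul (PV_pow (p := p) (p - 0))).mul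
        (PV_p_inv (p := p))
      rw [bernoulli_zero]
      refine this.mono ?_
      have : (4 : ℤ) ≤ ((p - 0 : ℕ) : ℤ) := by
        have : 4 ≤ p - 0 := by omega
        exact_mod_cast this
      omega
    · have hchoose : PV p 1 ((p.choose i : ℕ) : ℚ) :=
        PV_nat_of_dvd (Nat.Prime.dvd_choose_self hp h0 (by omega))
      by_cases hpm2 : i = p - 2
      · -- bernoulli (p - 2) = 0 since p - 2 is odd and > 1
        have hodd : Odd (p - 2) := by
          have := hp.odd_of_ne_two (by omega)
          rw [Nat.odd_iff] at this ⊢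
          omega
        have hb : bernoulli (p - 2) = 0 := by
          rw [bernoulli_eq_bernoulli'_of_ne_one (by omega)]
          exact bernoulli'_eq_zero_of_odd hodd (by omega)
        subst hpm2
        rw [hb]
        simp [PV_zero]
      by_cases hpm3 : i = p - 3
      · subst hpm3
        have hB := bern_p3 (p := p) h3
        have := ((hB.mul hchoose).mul (PV_pow (p := p) (p - (p - 3)))).mul (PV_p_inv (p := p))
        refine this.mono ?_
        have h33 : (3 : ℤ) ≤ ((p - (p - 3) : ℕ) : ℤ) := by
          have : p - (p - 3) = 3 := by omega
          omega
        omega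
      · -- i ≤ p - 4
        have hB := bern_val (p := p) i (by omega)
        have := ((hB.mul hchoose).mul (PV_pow (p := p) (p - i))).mul (PV_p_inv (p := p))
        refine this.mono ?_
        have h4 : 4 ≤ p - i := by omega
        have h4' : (4 : ℤ) ≤ ((p - i : ℕ) : ℤ) := by exact_mod_cast h4
        omega
  have hfinal : (((∑ a ∈ Finset.Icc 1 (p - 1), (a : ℤ) ^ (p - 1)) - p
        - ((p - 1).factorial : ℤ) : ℤ) : ℚ)
      - ((p : ℚ) * bernoulli (p - 1) - p - ((p - 1).factorial : ℚ))
      = ∑ i ∈ Finset.range (p - 1),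
          bernoulli i * ((p.choose i : ℕ) : ℚ) * (p : ℚ) ^ (p - i) / (p : ℚ) := by
    push_cast
    rw [hIcc, hSq, hsplit, hlastF]
    ring
  rw [hfinal]
  exact hT
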